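/- Fay's trisecant identity for the Kronecker theta function: let θ be the odd Jacobi theta function normalized so that θ'(0) = 1, and define S_c(z) = θ(z+c)/(θ(z)θ(c)). Then for generic a, b, x, y one has S_a(x)·S_b(y) = S_a(x-y)·S_{a+b}(y) + S_{a+b}(x)·S_b(y-x). -/

import Mathlib

open Complex
open Filter Set Bornology Function Topology

section ThetaBasics
variable {τ : ℂ} {θ : ℂ → ℂ}

lemma theta_zero (hodd : ∀ z, θ (-z) = -θ z) : θ 0 = 0 := by
  have h := hodd 0
  rw [neg_zero] at h
  linear_combination h / 2

lemma theta_sub_one (hper1 : ∀ z, θ (z + 1) = -θ z) (z : ℂ) : θ (z - 1) = -θ z := by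
  have h := hper1 (z - 1)
  rw [sub_add_cancel] at h
  linear_combination h

lemma theta_sub_tau (hper2 : ∀ z, θ (z + τ)
      = -Complex.exp (-(Real.pi : ℂ) * Complex.I * τ)
          * Complex.exp (-2 * (Real.pi : ℂ) * Complex.I * z) * θ z) (z : ℂ) :
    θ z = -Complex.exp (-(Real.pi : ℂ) * Complex.I * τ)
          * Complex.exp (-2 * (Real.pi : ℂ) * Complex.I * (z - τ)) * θ (z - τ) := by
  have h := hper2 (z - τ)
  rw [sub_add_cancel] at h
  exact h

lemma theta_deriv_one (hper1 : ∀ z, θ (z + 1) = -θ z) (z : ℂ) :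
    deriv θ (z + 1) = -deriv θ z := by
  have h : (fun w => θ (w + 1)) = fun w => -θ w := funext hper1
  rw [← deriv_comp_add_const θ 1, h, deriv.fun_neg]

lemma theta_deriv_tau (hθ : Differentiable ℂ θ)
    (hper2 : ∀ z, θ (z + τ)
      = -Complex.exp (-(Real.pi : ℂ) * Complex.I * τ)
          * Complex.exp (-2 * (Real.pi : ℂ) * Complex.I * z) * θ z)
    (z : ℂ) (hz : θ z = 0) :
    deriv θ (z + τ) = -Complex.exp (-(Real.pi : ℂ) * Complex.I * τ)
          * Complex.exp (-2 * (Real.pi : ℂ) * Complex.I * z) * deriv θ z := by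
  set E := Complex.exp (-(Real.pi : ℂ) * Complex.I * τ) with hE
  have hexp : ∀ w : ℂ, HasDerivAt (fun u : ℂ => Complex.exp (-2 * (Real.pi : ℂ) * Complex.I * u))
      (-2 * (Real.pi : ℂ) * Complex.I * Complex.exp (-2 * (Real.pi : ℂ) * Complex.I * w)) w := by
    intro w
    have h0 : HasDerivAt (fun u : ℂ => -2 * (Real.pi : ℂ) * Complex.I * u)
        (-2 * (Real.pi : ℂ) * Complex.I) w := by
      simpa using (hasDerivAt_id w).const_mul (-2 * (Real.pi : ℂ) * Complex.I)
    simpa [mul_comm] using h0.cexp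
  have hF : HasDerivAt (fun u => -E * Complex.exp (-2 * (Real.pi : ℂ) * Complex.I * u) * θ u)
      ((-E * (-2 * (Real.pi : ℂ) * Complex.I * Complex.exp (-2 * (Real.pi : ℂ) * Complex.I * z))) * θ z
        + (-E * Complex.exp (-2 * (Real.pi : ℂ) * Complex.I * z)) * deriv θ z) z :=
    (((hexp z).const_mul (-E)).mul (hθ z).hasDerivAt)
  have hL : deriv θ (z + τ) = deriv (fun w => θ (w + τ)) z := (deriv_comp_add_const θ τ z).symm
  have h : (fun w => θ (w + τ)) = fun u => -E * Complex.exp (-2 * (Real.pi : ℂ) * Complex.I * u) * θ u :=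
    funext hper2
  rw [hL, h, hF.deriv, hz]
  ring

lemma lattice_theta_zero (hzero : ∀ z, θ z = 0 ↔ ∃ m n : ℤ, z = (m : ℂ) + (n : ℂ) * τ)
    (m n : ℤ) : θ ((m : ℂ) + (n : ℂ) * τ) = 0 := (hzero _).mpr ⟨m, n, rfl⟩

lemma theta_deriv_ne_zero (hθ : Differentiable ℂ θ)
    (hnorm : deriv θ 0 = 1)
    (hzero : ∀ z, θ z = 0 ↔ ∃ m n : ℤ, z = (m : ℂ) + (n : ℂ) * τ)
    (hper1 : ∀ z, θ (z + 1) = -θ z)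
    (hper2 : ∀ z, θ (z + τ)
      = -Complex.exp (-(Real.pi : ℂ) * Complex.I * τ)
          * Complex.exp (-2 * (Real.pi : ℂ) * Complex.I * z) * θ z)
    (p : ℂ) (hp : θ p = 0) : deriv θ p ≠ 0 := by
  obtain ⟨m, n, rfl⟩ := (hzero p).mp hp
  have keyτ : ∀ z : ℂ, θ z = 0 → (deriv θ z ≠ 0 ↔ deriv θ (z + τ) ≠ 0) := by
    intro z hz
    rw [theta_deriv_tau hθ hper2 z hz]
    constructor
    · intro h
      exact mul_ne_zero (by simp [Complex.exp_ne_zero]) h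
    · intro h hc
      rw [hc, mul_zero] at h
      exact h rfl
  have key1 : ∀ z : ℂ, deriv θ z ≠ 0 ↔ deriv θ (z + 1) ≠ 0 := by
    intro z
    rw [theta_deriv_one hper1 z]
    simp
  have hn : ∀ n : ℤ, deriv θ ((n : ℂ) * τ) ≠ 0 := by
    intro n
    induction n using Int.induction_on with
    | zero => simpa using hnorm ▸ one_ne_zero
    | succ i ih =>
        have hzi : θ ((i : ℂ) * τ) = 0 := by
          have := lattice_theta_zero hzero 0 i
          simpa using this
        have := (keyτ _ hzi).mp ih
        have harg : ((i : ℂ) * τ + τ) = ((i + 1 : ℤ) : ℂ) * τ := by push_cast; ring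
        rwa [harg] at this
    | pred i ih =>
        have hzi : θ (((-i - 1 : ℤ) : ℂ) * τ) = 0 := by
          have := lattice_theta_zero hzero 0 (-i - 1)
          simpa using this
        apply ((keyτ _ hzi).mpr)
        have harg : ((( -i - 1 : ℤ) : ℂ) * τ + τ) = ((-i : ℤ) : ℂ) * τ := by push_cast; ring
        rwa [harg]
  have hm : ∀ (w : ℂ), deriv θ w ≠ 0 → ∀ m : ℤ, deriv θ (w + (m : ℂ)) ≠ 0 := by
    intro w hw m
    induction m using Int.induction_on with
    | zero => simpa using hw
    | succ i ih =>
        have := (key1 (w + (i : ℂ))).mp ih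
        have harg : (w + (i : ℂ) + 1) = w + ((i + 1 : ℤ) : ℂ) := by push_cast; ring
        rwa [harg] at this
    | pred i ih =>
        apply (key1 (w + ((-i - 1 : ℤ) : ℂ))).mpr
        have harg : (w + ((-i - 1 : ℤ) : ℂ) + 1) = w + ((-i : ℤ) : ℂ) := by push_cast; ring
        rwa [harg]
  have := hm ((n : ℂ) * τ) (hn n) m
  have harg : ((n : ℂ) * τ + (m : ℂ)) = (m : ℂ) + (n : ℂ) * τ := by ring
  rwa [harg] at this

end ThetaBasics

lemma exists_entire_quotient (G D : ℂ → ℂ) (hG : Differentiable ℂ G) (hD : Differentiable ℂ D)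
    (hctble : {x : ℂ | D x = 0}.Countable)
    (hV : ∀ p, D p = 0 → ∃ V : ℂ → ℂ, ContinuousAt V p ∧ ∀ x ≠ p, G x / D x = V x) :
    ∃ H : ℂ → ℂ, Differentiable ℂ H ∧ ∀ x, D x ≠ 0 → H x = G x / D x := by
  classical
  set q : ℂ → ℂ := fun x => G x / D x with hq
  refine ⟨fun x => if D x = 0 then limUnder (𝓝[≠] x) q else q x, ?_, fun x hx => by simp [hx, q]⟩
  set H : ℂ → ℂ := fun x => if D x = 0 then limUnder (𝓝[≠] x) q else q x with hH
  intro p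
  by_cases hp : D p = 0
  · obtain ⟨V, hVc, hVeq⟩ := hV p hp
    have hne : ∀ᶠ x in 𝓝 p, x ≠ p → D x ≠ 0 := by
      have h2 : ∀ᶠ x in 𝓝[≠] p, D x ≠ 0 := by
        rcases (hD.analyticAt p).eventually_eq_zero_or_eventually_ne_zero with h | h
        · exfalso
          have hint : p ∈ interior {x : ℂ | D x = 0} := mem_interior_iff_mem_nhds.mpr h
          have hdc : Dense {x : ℂ | D x = 0}ᶜ := hctble.dense_compl ℂ
          rw [interior_eq_empty_iff_dense_compl.mpr hdc] at hint
          exact hint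
        · exact h
      exact eventually_nhdsWithin_iff.mp h2
    have hVb : ∀ᶠ x in 𝓝 p, ‖V x‖ ≤ ‖V p‖ + 1 :=
      hVc.norm.eventually_le_const (lt_add_one _)
    obtain ⟨s, hs, hsub⟩ := eventually_iff_exists_mem.mp (hne.and hVb)
    have hdiff : DifferentiableOn ℂ q (s \ {p}) := by
      rintro x ⟨hxs, hxp⟩
      exact ((hG.differentiableAt.div hD.differentiableAt
        ((hsub x hxs).1 hxp)).differentiableWithinAt)
    have hbdd : BddAbove ((norm ∘ q) '' (s \ {p})) := by
      refine ⟨‖V p‖ + 1, ?_⟩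
      rintro v ⟨x, ⟨hxs, hxp⟩, rfl⟩
      have hqv : q x = V x := hVeq x hxp
      simp only [comp_apply, hqv]
      exact (hsub x hxs).2
    have hupd := Complex.differentiableOn_update_limUnder_of_bddAbove hs hdiff hbdd
    have hdat : DifferentiableAt ℂ (update q p (limUnder (𝓝[≠] p) q)) p :=
      hupd.differentiableAt hs
    have heq : H =ᶠ[𝓝 p] update q p (limUnder (𝓝[≠] p) q) := by
      filter_upwards [hs] with x hx
      by_cases hxp : x = p
      · subst hxp; simp [H, hp, update_self]
      · have hDx : D x ≠ 0 := (hsub x hx).1 hxp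
        simp [H, hDx, update_of_ne hxp]
    exact (heq.differentiableAt_iff).mpr hdat
  · have hne : ∀ᶠ x in 𝓝 p, D x ≠ 0 := (hD.continuous.continuousAt).eventually_ne hp
    have heq : H =ᶠ[𝓝 p] q := by
      filter_upwards [hne] with x hx
      simp [H, hx]
    exact (heq.differentiableAt_iff).mpr (hG.differentiableAt.div hD.differentiableAt hp)

theorem fay_star (τ : ℂ) (hτ : 0 < τ.im) (θ : ℂ → ℂ) (hθ : Differentiable ℂ θ)
    (hodd : ∀ z, θ (-z) = -θ z)
    (hnorm : deriv θ 0 = 1)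
    (hzero : ∀ z, θ z = 0 ↔ ∃ m n : ℤ, z = (m : ℂ) + (n : ℂ) * τ)
    (hper1 : ∀ z, θ (z + 1) = -θ z)
    (hper2 : ∀ z, θ (z + τ)
      = -Complex.exp (-(Real.pi : ℂ) * Complex.I * τ)
          * Complex.exp (-2 * (Real.pi : ℂ) * Complex.I * z) * θ z)
    (a b y : ℂ) (ha : θ a ≠ 0) (hy : θ y ≠ 0) (hya : θ (y - a) ≠ 0) (x : ℂ) :
    θ (x + a) * θ (y + b) * (θ (x - y) * θ (a + b))
      + θ (x + a + b) * θ (y - x + b) * (θ y * θ a)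
      = θ (y + a + b) * θ b * (θ (x - y + a) * θ x) := by
  set E := Complex.exp (-(Real.pi : ℂ) * Complex.I * τ) with hE
  set ee : ℂ → ℂ := fun z => Complex.exp (-2 * (Real.pi : ℂ) * Complex.I * z) with hee
  set G : ℂ → ℂ := fun u => θ (u + a) * θ (y + b) * (θ (u - y) * θ (a + b))
      + θ (u + a + b) * θ (y - u + b) * (θ y * θ a)
      - θ (y + a + b) * θ b * (θ (u - y + a) * θ u) with hG
  set D : ℂ → ℂ := fun u => θ (u - y + a) * θ u with hD
  set μ : ℂ → ℂ := fun u => E ^ 2 * (ee (u + a) * ee (u - y)) with hμ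
  have hee_ne : ∀ u, ee u ≠ 0 := fun u => by simp [hee, Complex.exp_ne_zero]
  have hE_ne : E ≠ 0 := by simp [hE, Complex.exp_ne_zero]
  have hμ_ne : ∀ u, μ u ≠ 0 := fun u =>
    mul_ne_zero (pow_ne_zero _ hE_ne) (mul_ne_zero (hee_ne _) (hee_ne _))
  have hθ0 : θ 0 = 0 := theta_zero hodd
  have hshift : ∀ c : ℂ, Differentiable ℂ (fun u : ℂ => θ (u + c)) :=
    fun c => hθ.comp (differentiable_id.add_const c)
  have hshift2 : Differentiable ℂ (fun u : ℂ => θ (u - y + a)) :=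
    hθ.comp ((differentiable_id.sub_const y).add_const a)
  have hshift3 : Differentiable ℂ (fun u : ℂ => θ (u - y)) :=
    hθ.comp (differentiable_id.sub_const y)
  have hshift4 : Differentiable ℂ (fun u : ℂ => θ (y - u + b)) :=
    hθ.comp (((differentiable_const y).sub differentiable_id).add_const b)
  have hshift5 : Differentiable ℂ (fun u : ℂ => θ (u + a + b)) :=
    hθ.comp ((differentiable_id.add_const a).add_const b)
  have hGdiff : Differentiable ℂ G := by
    apply Differentiable.sub
    · apply Differentiable.add
      · exact ((hshift a).mul (differentiable_const _)).mul
          (hshift3.mul (differentiable_const _))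
      · exact (hshift5.mul hshift4).mul (differentiable_const _)
    · exact (differentiable_const _).mul (hshift2.mul hθ)
  have hDdiff : Differentiable ℂ D := hshift2.mul hθ
  have hD1 : ∀ u, D (u + 1) = D u := by
    intro u
    show θ (u + 1 - y + a) * θ (u + 1) = θ (u - y + a) * θ u
    rw [show u + 1 - y + a = (u - y + a) + 1 by ring, hper1, hper1]
    ring
  have hG1 : ∀ u, G (u + 1) = G u := by
    intro u
    show θ (u + 1 + a) * θ (y + b) * (θ (u + 1 - y) * θ (a + b))
      + θ (u + 1 + a + b) * θ (y - (u + 1) + b) * (θ y * θ a)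
      - θ (y + a + b) * θ b * (θ (u + 1 - y + a) * θ (u + 1))
      = θ (u + a) * θ (y + b) * (θ (u - y) * θ (a + b))
      + θ (u + a + b) * θ (y - u + b) * (θ y * θ a)
      - θ (y + a + b) * θ b * (θ (u - y + a) * θ u)
    rw [show u + 1 + a + b = (u + a + b) + 1 by ring,
      show u + 1 - y + a = (u - y + a) + 1 by ring,
      show u + 1 + a = (u + a) + 1 by ring, show u + 1 - y = (u - y) + 1 by ring,
      show y - (u + 1) + b = (y - u + b) - 1 by ring,
      hper1, hper1, hper1, hper1, hper1, theta_sub_one hper1]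
    ring
  have heeadd : ∀ u v : ℂ, ee u * ee v = ee (u + v) := by
    intro u v
    simp only [hee, ← Complex.exp_add]
    congr 1
    ring
  have hE2 : E ^ 2 = ee τ := by
    simp only [hee, hE, pow_two, ← Complex.exp_add]
    congr 1
    ring
  have hDτ : ∀ u, D (u + τ) = μ u * D u := by
    intro u
    show θ (u + τ - y + a) * θ (u + τ) = μ u * (θ (u - y + a) * θ u)
    rw [show u + τ - y + a = (u - y + a) + τ by ring, hper2, hper2, hμ]
    have hkey : ee (u - y + a) * ee u = ee (u + a) * ee (u - y) := by
      rw [heeadd, heeadd]; congr 1; ring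
    linear_combination (E ^ 2 * θ (u - y + a) * θ u) * hkey
  have hGτ : ∀ u, G (u + τ) = μ u * G u := by
    intro u
    have hsub : θ (y - u + b) = -E * ee (y - (u + τ) + b) * θ (y - (u + τ) + b) := by
      have h := theta_sub_tau hper2 (y - u + b)
      rw [show y - u + b - τ = y - (u + τ) + b by ring] at h
      exact h
    have t1 : θ (u + τ + a) * θ (y + b) * (θ (u + τ - y) * θ (a + b))
        = μ u * (θ (u + a) * θ (y + b) * (θ (u - y) * θ (a + b))) := by
      rw [show u + τ + a = (u + a) + τ by ring, show u + τ - y = (u - y) + τ by ring,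
        hper2, hper2, hμ]
      ring
    have hkey2 : ee (u + a + b) = E ^ 2 * ee (u + a) * ee (u - y) * ee (y - (u + τ) + b) := by
      rw [hE2, show ee τ * ee (u + a) * ee (u - y) * ee (y - (u + τ) + b)
        = ee τ * (ee (u + a) * (ee (u - y) * ee (y - (u + τ) + b))) by ring,
        heeadd, heeadd, heeadd]
      congr 1
      ring
    have t2 : θ (u + τ + a + b) * θ (y - (u + τ) + b) * (θ y * θ a)
        = μ u * (θ (u + a + b) * θ (y - u + b) * (θ y * θ a)) := by
      rw [show u + τ + a + b = (u + a + b) + τ by ring, hper2, hsub, hμ]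
      linear_combination (θ (u + a + b) * θ (y - (u + τ) + b) * θ y * θ a * (-E)) * hkey2
    have t3 : θ (u + τ - y + a) * θ (u + τ) = μ u * (θ (u - y + a) * θ u) := hDτ u
    show θ (u + τ + a) * θ (y + b) * (θ (u + τ - y) * θ (a + b))
      + θ (u + τ + a + b) * θ (y - (u + τ) + b) * (θ y * θ a)
      - θ (y + a + b) * θ b * (θ (u + τ - y + a) * θ (u + τ))
      = μ u * (θ (u + a) * θ (y + b) * (θ (u - y) * θ (a + b))
      + θ (u + a + b) * θ (y - u + b) * (θ y * θ a)
      - θ (y + a + b) * θ b * (θ (u - y + a) * θ u))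
    linear_combination t1 + t2 - (θ (y + a + b) * θ b) * t3
  -- zero propagation
  have hGstep1 : ∀ u : ℂ, G u = 0 ↔ G (u + 1) = 0 := fun u => by rw [hG1 u]
  have hGstepτ : ∀ u : ℂ, G u = 0 ↔ G (u + τ) = 0 := by
    intro u
    rw [hGτ u]
    constructor
    · intro h; rw [h, mul_zero]
    · intro h; exact (mul_eq_zero.mp h).resolve_left (hμ_ne u)
  have hGint : ∀ (p : ℂ), G p = 0 → ∀ m : ℤ, G (p + (m : ℂ)) = 0 := by
    intro p hp m
    induction m using Int.induction_on with
    | zero => simpa using hp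
    | succ i ih =>
        have h2 := (hGstep1 (p + (i : ℂ))).mp ih
        rwa [show p + (i : ℂ) + 1 = p + ((i + 1 : ℤ) : ℂ) by push_cast; ring] at h2
    | pred i ih =>
        apply (hGstep1 (p + ((-i - 1 : ℤ) : ℂ))).mpr
        rwa [show p + ((-i - 1 : ℤ) : ℂ) + 1 = p + ((-i : ℤ) : ℂ) by push_cast; ring]
  have hGtau : ∀ (p : ℂ), G p = 0 → ∀ n : ℤ, G (p + (n : ℂ) * τ) = 0 := by
    intro p hp n
    induction n using Int.induction_on with
    | zero => simpa using hp
    | succ i ih =>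
        have h2 := (hGstepτ (p + (i : ℂ) * τ)).mp ih
        rwa [show p + (i : ℂ) * τ + τ = p + ((i + 1 : ℤ) : ℂ) * τ by push_cast; ring] at h2
    | pred i ih =>
        apply (hGstepτ (p + ((-i - 1 : ℤ) : ℂ) * τ)).mpr
        rwa [show p + ((-i - 1 : ℤ) : ℂ) * τ + τ = p + ((-i : ℤ) : ℂ) * τ by push_cast; ring]
  have hGbase0 : G 0 = 0 := by
    show θ (0 + a) * θ (y + b) * (θ (0 - y) * θ (a + b))
      + θ (0 + a + b) * θ (y - 0 + b) * (θ y * θ a)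
      - θ (y + a + b) * θ b * (θ (0 - y + a) * θ 0) = 0
    rw [show (0 : ℂ) - y + a = -y + a by ring, show (0 : ℂ) + a = a by ring,
      show (0 : ℂ) - y = -y by ring, show y - 0 + b = y + b by ring, hθ0, hodd y]
    ring
  have hGbaseya : G (y - a) = 0 := by
    show θ (y - a + a) * θ (y + b) * (θ (y - a - y) * θ (a + b))
      + θ (y - a + a + b) * θ (y - (y - a) + b) * (θ y * θ a)
      - θ (y + a + b) * θ b * (θ (y - a - y + a) * θ (y - a)) = 0
    rw [show y - a + a + b = y + b by ring, show y - a - y + a = (0 : ℂ) by ring,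
      show y - a + a = y by ring, show y - a - y = -a by ring,
      show y - (y - a) + b = a + b by ring, hθ0, hodd a]
    ring
  have hGvanish : ∀ u, D u = 0 → G u = 0 := by
    intro u hu
    have hu' : θ (u - y + a) * θ u = 0 := hu
    rcases mul_eq_zero.mp hu' with h | h
    · obtain ⟨m, n, hmn⟩ := (hzero _).mp h
      have h2 := hGtau _ (hGint _ hGbaseya m) n
      rwa [show y - a + (m : ℂ) + (n : ℂ) * τ = u by linear_combination -hmn] at h2
    · obtain ⟨m, n, hmn⟩ := (hzero _).mp h
      have h2 := hGtau _ (hGint _ hGbase0 m) n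
      rwa [show (0 : ℂ) + (m : ℂ) + (n : ℂ) * τ = u by linear_combination -hmn] at h2
  -- countability of zero set
  have hθct : {z : ℂ | θ z = 0}.Countable := by
    have hsub : {z : ℂ | θ z = 0} ⊆ range (fun mn : ℤ × ℤ => (mn.1 : ℂ) + (mn.2 : ℂ) * τ) := by
      intro z hz
      obtain ⟨m, n, hmn⟩ := (hzero z).mp hz
      exact ⟨(m, n), hmn.symm⟩
    exact (countable_range _).mono hsub
  have hDct : {u : ℂ | D u = 0}.Countable := by
    have hsub : {u : ℂ | D u = 0}
        ⊆ ((fun u : ℂ => u - y + a) ⁻¹' {z | θ z = 0}) ∪ {z | θ z = 0} := by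
      intro u hu
      have hu' : θ (u - y + a) * θ u = 0 := hu
      rcases mul_eq_zero.mp hu' with h | h
      · exact Or.inl h
      · exact Or.inr h
    refine Set.Countable.mono hsub (Set.Countable.union ?_ hθct)
    exact hθct.preimage (fun u v huv => by simpa using huv)
  -- non-degeneracy
  have hnondeg : ∀ p : ℂ, θ p = 0 → θ (p - y + a) = 0 → False := by
    intro p h1 h2
    obtain ⟨m, n, hmn⟩ := (hzero p).mp h1
    obtain ⟨m', n', hmn'⟩ := (hzero _).mp h2
    apply hya
    rw [hzero]
    exact ⟨m - m', n - n', by push_cast; linear_combination hmn - hmn'⟩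
  -- local quotient representations
  have hVs : ∀ p, D p = 0 → ∃ V : ℂ → ℂ, ContinuousAt V p ∧ ∀ u ≠ p, G u / D u = V u := by
    intro p hp
    have hGp : G p = 0 := hGvanish p hp
    have hfacG : ∀ u : ℂ, G u = (u - p) * dslope G p u := by
      intro u
      have h := sub_smul_dslope G p u
      rw [hGp, sub_zero] at h
      rw [← h, smul_eq_mul]
    have hp' : θ (p - y + a) * θ p = 0 := hp
    rcases mul_eq_zero.mp hp' with hf | hf
    · -- θ (p - y + a) = 0
      have hθp : θ p ≠ 0 := fun h => hnondeg p h hf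
      have hΘp : (fun u : ℂ => θ (u - y + a)) p = 0 := hf
      have hfacΘ : ∀ u : ℂ, θ (u - y + a) = (u - p) * dslope (fun z => θ (z - y + a)) p u := by
        intro u
        have h := sub_smul_dslope (fun z : ℂ => θ (z - y + a)) p u
        rw [hf, sub_zero] at h
        rw [← h, smul_eq_mul]
      refine ⟨fun u => dslope G p u / (dslope (fun z => θ (z - y + a)) p u * θ u), ?_, ?_⟩
      · apply ContinuousAt.div
        · exact continuousAt_dslope_same.mpr (hGdiff p)
        · exact ((continuousAt_dslope_same.mpr (hshift2 p)).mul
            hθ.continuous.continuousAt)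
        · rw [dslope_same]
          have hder : deriv (fun z : ℂ => θ (z - y + a)) p = deriv θ (p - y + a) := by
            have heq2 : (fun z : ℂ => θ (z - y + a)) = fun z : ℂ => θ (z + (a - y)) := by
              funext z; ring_nf
            rw [heq2, deriv_comp_add_const]
            ring_nf
          rw [hder]
          exact mul_ne_zero (theta_deriv_ne_zero hθ hnorm hzero hper1 hper2 _ hf) hθp
      · intro u hu
        show G u / (θ (u - y + a) * θ u) = _
        rw [hfacG u, hfacΘ u,
          show (u - p) * dslope (fun z => θ (z - y + a)) p u * θ u
            = (u - p) * (dslope (fun z => θ (z - y + a)) p u * θ u) by ring]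
        exact mul_div_mul_left _ _ (sub_ne_zero.mpr hu)
    · -- θ p = 0
      have hθpa : θ (p - y + a) ≠ 0 := fun h => hnondeg p hf h
      have hfacθ : ∀ u : ℂ, θ u = (u - p) * dslope θ p u := by
        intro u
        have h := sub_smul_dslope θ p u
        rw [hf, sub_zero] at h
        rw [← h, smul_eq_mul]
      refine ⟨fun u => dslope G p u / (θ (u - y + a) * dslope θ p u), ?_, ?_⟩
      · apply ContinuousAt.div
        · exact continuousAt_dslope_same.mpr (hGdiff p)
        · exact ((hshift2.continuous.continuousAt).mul
            (continuousAt_dslope_same.mpr (hθ p)))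
        · rw [dslope_same]
          exact mul_ne_zero hθpa (theta_deriv_ne_zero hθ hnorm hzero hper1 hper2 _ hf)
      · intro u hu
        show G u / (θ (u - y + a) * θ u) = _
        rw [hfacG u, hfacθ u,
          show θ (u - y + a) * ((u - p) * dslope θ p u)
            = (u - p) * (θ (u - y + a) * dslope θ p u) by ring]
        exact mul_div_mul_left _ _ (sub_ne_zero.mpr hu)
  obtain ⟨H, hHdiff, hHval⟩ := exists_entire_quotient G D hGdiff hDdiff hDct hVs
  have hHc : Continuous H := hHdiff.continuous
  have hZdense : Dense {u : ℂ | D u ≠ 0} := hDct.dense_compl ℂ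
  have hH1 : ∀ u, H (u + 1) = H u := by
    have h1 : (fun u => H (u + 1)) = H := by
      apply Continuous.ext_on hZdense (hHc.comp (continuous_add_right 1)) hHc
      intro u hu
      have h2 : D (u + 1) ≠ 0 := by rw [hD1]; exact hu
      show H (u + 1) = H u
      rw [hHval _ h2, hHval _ hu, hG1, hD1]
    exact fun u => congrFun h1 u
  have hHτ : ∀ u, H (u + τ) = H u := by
    have h1 : (fun u => H (u + τ)) = H := by
      apply Continuous.ext_on hZdense (hHc.comp (continuous_add_right τ)) hHc
      intro u hu
      have h2 : D (u + τ) ≠ 0 := by rw [hDτ]; exact mul_ne_zero (hμ_ne u) hu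
      show H (u + τ) = H u
      rw [hHval _ h2, hHval _ hu, hGτ, hDτ, mul_div_mul_left _ _ (hμ_ne u)]
    exact fun u => congrFun h1 u
  have hP1 : Function.Periodic H 1 := hH1
  have hPτ : Function.Periodic H τ := hHτ
  set K : Set ℂ := (fun st : ℝ × ℝ => (st.1 : ℂ) + (st.2 : ℂ) * τ) ''
      (Icc (0 : ℝ) 1 ×ˢ Icc (0 : ℝ) 1) with hK
  have hKcpt : IsCompact K := (isCompact_Icc.prod isCompact_Icc).image (by fun_prop)
  have hrange : range H ⊆ H '' K := by
    rintro v ⟨z, rfl⟩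
    set t : ℝ := z.im / τ.im with ht
    set s : ℝ := z.re - t * τ.re with hs
    have him : t * τ.im = z.im := by
      rw [ht]; exact div_mul_cancel₀ _ (ne_of_gt hτ)
    have hre : s + t * τ.re = z.re := by rw [hs]; ring
    have hz : z = (s : ℂ) + (t : ℂ) * τ := by
      apply Complex.ext
      · simp only [Complex.add_re, Complex.ofReal_re, Complex.mul_re, Complex.ofReal_im,
          zero_mul, sub_zero]
        linarith [hre]
      · simp only [Complex.add_im, Complex.ofReal_im, Complex.mul_im, Complex.ofReal_re,
          zero_mul, add_zero, zero_add]
        linarith [him]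
    have hwK : (((Int.fract s : ℝ) : ℂ) + ((Int.fract t : ℝ) : ℂ) * τ) ∈ K :=
      ⟨(Int.fract s, Int.fract t),
        ⟨⟨⟨Int.fract_nonneg s, (Int.fract_lt_one s).le⟩,
          ⟨Int.fract_nonneg t, (Int.fract_lt_one t).le⟩⟩, rfl⟩⟩
    refine ⟨_, hwK, ?_⟩
    have hfs : ((Int.fract s : ℝ) : ℂ) = (s : ℂ) - ((⌊s⌋ : ℤ) : ℂ) := by
      rw [← Int.self_sub_floor]; push_cast; ring
    have hft : ((Int.fract t : ℝ) : ℂ) = (t : ℂ) - ((⌊t⌋ : ℤ) : ℂ) := by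
      rw [← Int.self_sub_floor]; push_cast; ring
    have hzd : z = (((Int.fract s : ℝ) : ℂ) + ((Int.fract t : ℝ) : ℂ) * τ + ((⌊t⌋ : ℤ) : ℂ) * τ)
        + ((⌊s⌋ : ℤ) : ℂ) * (1 : ℂ) := by
      rw [hz, hfs, hft]; ring
    rw [hzd, (hP1.int_mul ⌊s⌋) _, (hPτ.int_mul ⌊t⌋) _]
  have hbd : IsBounded (range H) := ((hKcpt.image hHc).isBounded).subset hrange
  have hDy : D y ≠ 0 := by
    show θ (y - y + a) * θ y ≠ 0
    rw [show y - y + a = a by ring]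
    exact mul_ne_zero ha hy
  have hGy : G y = 0 := by
    show θ (y + a) * θ (y + b) * (θ (y - y) * θ (a + b))
      + θ (y + a + b) * θ (y - y + b) * (θ y * θ a)
      - θ (y + a + b) * θ b * (θ (y - y + a) * θ y) = 0
    rw [show y - y + b = b by ring, show y - y + a = a by ring,
      show y - y = (0 : ℂ) by ring, hθ0]
    ring
  have hHy : H y = 0 := by
    rw [hHval _ hDy, hGy, zero_div]
  have hH0 : ∀ u, H u = 0 := by
    intro u
    have := hHdiff.apply_eq_apply_of_bounded hbd u y
    rw [this, hHy]
  have hGzero : ∀ u, D u ≠ 0 → G u = 0 := by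
    intro u hu
    have h1 := hHval u hu
    rw [hH0 u] at h1
    have h2 := h1.symm
    rw [div_eq_zero_iff] at h2
    exact h2.resolve_right hu
  have hGall : G = fun _ => 0 := by
    apply Continuous.ext_on hZdense hGdiff.continuous continuous_const
    intro u hu
    exact hGzero u hu
  have hfin : θ (x + a) * θ (y + b) * (θ (x - y) * θ (a + b))
      + θ (x + a + b) * θ (y - x + b) * (θ y * θ a)
      - θ (y + a + b) * θ b * (θ (x - y + a) * θ x) = 0 := congrFun hGall x
  linear_combination hfin

/-- The Kronecker theta function `S_c(z) = θ(z+c)/(θ(z)θ(c))`. -/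
noncomputable def kroneckerS (θ : ℂ → ℂ) (c z : ℂ) : ℂ := θ (z + c) / (θ z * θ c)

/-- Fay's trisecant identity for the Kronecker theta function: with `θ` the odd
Jacobi theta function for `τ` in the upper half-plane, normalized by `θ'(0) = 1`,
entire, with zeros exactly on `Λ_τ = ℤ ⊕ ℤτ`, and satisfying `θ(z+1) = -θ(z)` and
`θ(z+τ) = -e^{-πiτ} e^{-2πiz} θ(z)`, one has
`S_a(x)·S_b(y) = S_a(x-y)·S_{a+b}(y) + S_{a+b}(x)·S_b(y-x)` wherever all the
denominators are nonzero. -/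
theorem fay_trisecant (τ : ℂ) (hτ : 0 < τ.im) (θ : ℂ → ℂ)
    (hθ : Differentiable ℂ θ)
    (hodd : ∀ z, θ (-z) = -θ z)
    (hnorm : deriv θ 0 = 1)
    (hzero : ∀ z, θ z = 0 ↔ ∃ m n : ℤ, z = (m : ℂ) + (n : ℂ) * τ)
    (hper1 : ∀ z, θ (z + 1) = -θ z)
    (hper2 : ∀ z, θ (z + τ)
      = -Complex.exp (-(Real.pi : ℂ) * Complex.I * τ)
          * Complex.exp (-2 * (Real.pi : ℂ) * Complex.I * z) * θ z)
    (a b x y : ℂ)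
    (ha : θ a ≠ 0) (hb : θ b ≠ 0) (hab : θ (a + b) ≠ 0)
    (hx : θ x ≠ 0) (hy : θ y ≠ 0) (hxy : θ (x - y) ≠ 0) (hyx : θ (y - x) ≠ 0) :
    kroneckerS θ a x * kroneckerS θ b y
      = kroneckerS θ a (x - y) * kroneckerS θ (a + b) y
        + kroneckerS θ (a + b) x * kroneckerS θ b (y - x) := by
  have hθc : Continuous θ := hθ.continuous
  have hθct : {z : ℂ | θ z = 0}.Countable := by
    have hsub : {z : ℂ | θ z = 0} ⊆ range (fun mn : ℤ × ℤ => (mn.1 : ℂ) + (mn.2 : ℂ) * τ) := by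
      intro z hz
      obtain ⟨m, n, hmn⟩ := (hzero z).mp hz
      exact ⟨(m, n), hmn.symm⟩
    exact (Set.countable_range _).mono hsub
  have hbad : ({c : ℂ | θ c = 0} ∪ ((fun c : ℂ => y - c) ⁻¹' {z | θ z = 0})).Countable := by
    refine hθct.union (hθct.preimage ?_)
    intro u v huv
    simpa using huv
  have hdense : Dense ({c : ℂ | θ c = 0} ∪ ((fun c : ℂ => y - c) ⁻¹' {z | θ z = 0}))ᶜ :=
    hbad.dense_compl ℂ
  have hfun : (fun c : ℂ => θ (x + c) * θ (y + b) * (θ (x - y) * θ (c + b))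
        + θ (x + c + b) * θ (y - x + b) * (θ y * θ c))
      = fun c : ℂ => θ (y + c + b) * θ b * (θ (x - y + c) * θ x) := by
    apply Continuous.ext_on hdense
    · fun_prop
    · fun_prop
    · intro c hc
      simp only [Set.mem_compl_iff, Set.mem_union, Set.mem_preimage, Set.mem_setOf_eq] at hc
      push_neg at hc
      exact fay_star τ hτ θ hθ hodd hnorm hzero hper1 hper2 c b y hc.1 hy hc.2 x
  have hstar : θ (x + a) * θ (y + b) * (θ (x - y) * θ (a + b))
        + θ (x + a + b) * θ (y - x + b) * (θ y * θ a)
      = θ (y + a + b) * θ b * (θ (x - y + a) * θ x) := congrFun hfun a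
  have hyx2 : θ (y - x) = -θ (x - y) := by
    rw [show y - x = -(x - y) by ring, hodd]
  simp only [kroneckerS]
  rw [show y + (a + b) = y + a + b by ring, show x + (a + b) = x + a + b by ring, hyx2]
  field_simp
  linear_combination hstar
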